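/- For complex x, y with |x| + |y| < 1 and any complex number a, the double binomial series identity \sum_{i,j=0}^{\infty} \frac{(a)_{i+j}}{i! \, j!} x^i y^j = (1 - x - y)^{-a} holds, where the power is the principal branch. -/

import Mathlib

noncomputable def poch (x : ℂ) (k : ℕ) : ℂ := (ascPochhammer ℂ k).eval x

open Finset Filter Complex Metric

lemma poch_zero (a : ℂ) : poch a 0 = 1 := by simp [poch]

lemma poch_succ (a : ℂ) (n : ℕ) : poch a (n + 1) = poch a n * (a + n) := by
  simp [poch, ascPochhammer_succ_right]

noncomputable def Q (a : ℂ) (n : ℕ) : ℝ := ∏ k ∈ Finset.range n, (‖a‖ + k)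

lemma Q_nonneg (a : ℂ) (n : ℕ) : 0 ≤ Q a n :=
  Finset.prod_nonneg fun k _ => by positivity

lemma Q_succ (a : ℂ) (n : ℕ) : Q a (n + 1) = Q a n * (‖a‖ + n) := by
  simp [Q, Finset.prod_range_succ]

lemma norm_poch_le (a : ℂ) (n : ℕ) : ‖poch a n‖ ≤ Q a n := by
  induction n with
  | zero => simp [poch_zero, Q]
  | succ n ih =>
    rw [poch_succ, Q_succ]
    calc ‖poch a n * (a + n)‖ = ‖poch a n‖ * ‖a + (n:ℂ)‖ := norm_mul _ _
    _ ≤ Q a n * (‖a‖ + n) := by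
        apply mul_le_mul ih ?_ (norm_nonneg _) (Q_nonneg a n)
        calc ‖a + (n:ℂ)‖ ≤ ‖a‖ + ‖(n:ℂ)‖ := norm_add_le _ _
        _ = ‖a‖ + n := by simp

/-- generic ratio test helper -/
lemma summable_ratio_aux {f : ℕ → ℝ} {r C : ℝ} (hf0 : ∀ n, 0 ≤ f n) (hr0 : 0 ≤ r)
    (hr1 : r < 1) (hC : 0 ≤ C)
    (hstep : ∀ n : ℕ, f (n + 1) ≤ (C + n) / (n + 1) * r * f n) : Summable f := by
  set r' := (1 + r) / 2 with hr'
  have hrr' : r < r' := by rw [hr']; linarith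
  have hr'1 : r' < 1 := by rw [hr']; linarith
  apply summable_of_ratio_norm_eventually_le hr'1
  have hev : ∀ᶠ n : ℕ in atTop, (C + n) * r ≤ (n + 1) * r' := by
    filter_upwards [eventually_ge_atTop ⌈(C * r) / (r' - r)⌉₊] with n hn
    have h2 : (C * r) / (r' - r) ≤ n := le_trans (Nat.le_ceil _) (by exact_mod_cast hn)
    have h3 : C * r ≤ n * (r' - r) := by
      rw [div_le_iff₀ (by linarith)] at h2; linarith
    nlinarith [Nat.cast_nonneg (α := ℝ) n]
  filter_upwards [hev] with n hn
  rw [show ∀ t:ℝ, ‖t‖ = |t| from fun t => rfl, show ∀ t:ℝ, ‖t‖ = |t| from fun t => rfl,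
    _root_.abs_of_nonneg (hf0 _), _root_.abs_of_nonneg (hf0 _)]
  calc f (n+1) ≤ (C + n) / (n + 1) * r * f n := hstep n
  _ ≤ r' * f n := by
      apply mul_le_mul_of_nonneg_right ?_ (hf0 n)
      rw [div_mul_eq_mul_div, div_le_iff₀ (by positivity)]
      calc (C + n) * r ≤ (n+1) * r' := hn
      _ = r' * (n+1) := by ring
  _ = r' * f n := rfl

lemma summable_Q (a : ℂ) {r : ℝ} (h0 : 0 ≤ r) (h1 : r < 1) :
    Summable (fun n => Q a n / n.factorial * r ^ n) := by
  apply summable_ratio_aux (C := ‖a‖)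
    (fun n => by have := Q_nonneg a n; positivity) h0 h1 (norm_nonneg a)
  intro n
  have hfs : ((n+1).factorial : ℝ) = (n+1) * n.factorial := by
    push_cast [Nat.factorial_succ]; ring
  rw [Q_succ, hfs, pow_succ]
  have h1' : ((n:ℝ)+1) ≠ 0 := by positivity
  have h2' : ((n.factorial:ℝ)) ≠ 0 := by positivity
  apply le_of_eq; field_simp

lemma summable_Q' (a : ℂ) {r : ℝ} (h0 : 0 ≤ r) (h1 : r < 1) :
    Summable (fun n => Q a n * (‖a‖ + n) / n.factorial * r ^ n) := by
  apply summable_ratio_aux (C := ‖a‖ + 1)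
    (fun n => by have := Q_nonneg a n; positivity) h0 h1 (by positivity)
  intro n
  have hfs : ((n+1).factorial : ℝ) = (n+1) * n.factorial := by
    push_cast [Nat.factorial_succ]; ring
  rw [Q_succ, hfs, pow_succ]
  have h1' : ((n:ℝ)+1) ≠ 0 := by positivity
  have h2' : ((n.factorial:ℝ)) ≠ 0 := by positivity
  apply le_of_eq; push_cast; field_simp; ring

lemma summable_deriv_bound (a : ℂ) {r : ℝ} (h0 : 0 ≤ r) (h1 : r < 1) :
    Summable (fun n : ℕ => Q a n / n.factorial * (n * r ^ (n - 1))) := by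
  apply (summable_nat_add_iff 1).mp
  apply (summable_Q' a h0 h1).congr
  intro n
  have h2' : ((n.factorial:ℝ)) ≠ 0 := by positivity
  have hfs : ((n+1).factorial : ℝ) = (n+1) * n.factorial := by
    push_cast [Nat.factorial_succ]; ring
  rw [Q_succ, hfs]
  push_cast
  field_simp

lemma norm_term_le (a w : ℂ) (n : ℕ) :
    ‖poch a n / n.factorial * w ^ n‖ ≤ Q a n / n.factorial * ‖w‖ ^ n := by
  rw [norm_mul, norm_div, norm_pow, Complex.norm_natCast]
  have : (0:ℝ) < n.factorial := by positivity
  gcongr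
  · exact norm_poch_le a n

lemma summable_term (a w : ℂ) (hw : ‖w‖ < 1) :
    Summable (fun n : ℕ => poch a n / n.factorial * w ^ n) := by
  apply Summable.of_norm
  exact (summable_Q a (norm_nonneg w) hw).of_nonneg_of_le (fun n => norm_nonneg _)
    (norm_term_le a w)

lemma summable_dterm (a w : ℂ) (hw : ‖w‖ < 1) :
    Summable (fun n : ℕ => poch a n / n.factorial * ((n:ℂ) * w ^ (n - 1))) := by
  apply Summable.of_norm
  apply (summable_deriv_bound a (norm_nonneg w) hw).of_nonneg_of_le (fun n => norm_nonneg _)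
  intro n
  rw [norm_mul, norm_mul, norm_div, norm_pow, Complex.norm_natCast, Complex.norm_natCast]
  have : (0:ℝ) < n.factorial := by positivity
  gcongr
  · exact norm_poch_le a n

noncomputable def fb (a : ℂ) : ℂ → ℂ := fun w => ∑' n : ℕ, poch a n / n.factorial * w ^ n

noncomputable def db (a : ℂ) : ℂ → ℂ :=
  fun w => ∑' n : ℕ, poch a n / n.factorial * ((n:ℂ) * w ^ (n - 1))

lemma fb_hasDerivAt (a : ℂ) {w : ℂ} (hw : ‖w‖ < 1) : HasDerivAt (fb a) (db a w) w := by
  set r : ℝ := (‖w‖ + 1) / 2 with hr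
  have h0 : 0 < r := by have := norm_nonneg w; rw [hr]; linarith
  have hwr : ‖w‖ < r := by rw [hr]; linarith
  have hr1 : r < 1 := by rw [hr]; linarith
  apply hasDerivAt_tsum_of_isPreconnected
    (u := fun n : ℕ => Q a n / n.factorial * (n * r ^ (n - 1)))
    (summable_deriv_bound a h0.le hr1) isOpen_ball (convex_ball (0:ℂ) r).isPreconnected
    (y₀ := 0) (g' := fun n y => poch a n / n.factorial * ((n:ℂ) * y ^ (n - 1)))
  · intro n y _
    exact (hasDerivAt_pow n y).const_mul _
  · intro n y hy
    rw [mem_ball_zero_iff] at hy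
    rw [norm_mul, norm_mul, norm_div, norm_pow, Complex.norm_natCast, Complex.norm_natCast]
    have hfac : (0:ℝ) < n.factorial := by positivity
    have hQ := Q_nonneg a n
    have b1 : ‖poch a n‖ / (n.factorial:ℝ) ≤ Q a n / n.factorial := by
      gcongr
      exact norm_poch_le a n
    have b2 : (n:ℝ) * ‖y‖^(n-1) ≤ n * r^(n-1) := by
      gcongr
    exact mul_le_mul b1 b2 (by positivity) (by positivity)
  · exact mem_ball_zero_iff.mpr (by simpa using h0)
  · apply summable_of_ne_finset_zero (s := {0})
    intro n hn
    simp only [Finset.mem_singleton] at hn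
    rw [zero_pow hn, mul_zero]
  · exact mem_ball_zero_iff.mpr hwr

lemma ode (a : ℂ) {z : ℂ} (hz : ‖z‖ < 1) : (1 - z) * db a z = a * fb a z := by
  set c : ℕ → ℂ := fun n => poch a n / n.factorial with hc
  have hs : Summable (fun n => c n * ((n:ℂ) * z ^ (n - 1))) := summable_dterm a z hz
  have hterm : ∀ n : ℕ, z * (c n * ((n:ℂ) * z ^ (n - 1))) = c n * ((n:ℂ) * z ^ n) := by
    intro n
    cases n with
    | zero => simp
    | succ m => push_cast; ring
  have h3 : Summable (fun n => c n * ((n:ℂ) * z ^ n)) :=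
    (hs.mul_left z).congr hterm
  have h2 : Summable (fun n => c (n+1) * (((n:ℂ)+1) * z ^ n)) := by
    apply ((summable_nat_add_iff 1).mpr hs).congr
    intro n; push_cast; norm_num
  have t1 : db a z = ∑' n : ℕ, c (n+1) * (((n:ℂ)+1) * z ^ n) := by
    rw [db, Summable.tsum_eq_zero_add hs]
    push_cast
    simp
  have t2 : z * db a z = ∑' n : ℕ, c n * ((n:ℂ) * z ^ n) := by
    rw [db, ← tsum_mul_left]
    exact tsum_congr hterm
  have key : ∀ n : ℕ, c (n+1) * (((n:ℂ)+1) * z ^ n) - c n * ((n:ℂ) * z ^ n)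
      = a * (c n * z ^ n) := by
    intro n
    have hfac : ((n.factorial : ℂ)) ≠ 0 := by exact_mod_cast n.factorial_ne_zero
    have hfac1 : (((n+1).factorial : ℂ)) ≠ 0 := by exact_mod_cast (n+1).factorial_ne_zero
    have hfs : (((n+1).factorial : ℂ)) = ((n:ℂ)+1) * n.factorial := by
      push_cast [Nat.factorial_succ]; ring
    have hn1 : ((n:ℂ)+1) ≠ 0 := Nat.cast_add_one_ne_zero n
    have e1 : c (n+1) * ((n:ℂ)+1) = (a + n) * c n := by
      rw [hc]; simp only; rw [poch_succ, hfs]; field_simp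
    calc c (n+1) * (((n:ℂ)+1) * z ^ n) - c n * ((n:ℂ) * z ^ n)
        = (c (n+1) * ((n:ℂ)+1)) * z ^ n - c n * ((n:ℂ) * z ^ n) := by ring
    _ = ((a + n) * c n) * z ^ n - c n * ((n:ℂ) * z ^ n) := by rw [e1]
    _ = a * (c n * z ^ n) := by ring
  calc (1 - z) * db a z = db a z - z * db a z := by ring
  _ = ∑' n : ℕ, (c (n+1) * (((n:ℂ)+1) * z ^ n) - c n * ((n:ℂ) * z ^ n)) := by
      rw [t2, t1, ← Summable.tsum_sub h2 h3]
  _ = ∑' n : ℕ, a * (c n * z ^ n) := tsum_congr key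
  _ = a * fb a z := by rw [tsum_mul_left]; rfl

lemma one_sub_mem_slitPlane {w : ℂ} (hw : ‖w‖ < 1) : (1 - w) ∈ slitPlane := by
  rw [mem_slitPlane_iff]
  left
  have h1 : w.re ≤ ‖w‖ := by
    calc w.re ≤ |w.re| := le_abs_self _
    _ ≤ ‖w‖ := Complex.abs_re_le_norm w
  simp only [sub_re, one_re]
  linarith

lemma one_sub_ne_zero {w : ℂ} (hw : ‖w‖ < 1) : (1 : ℂ) - w ≠ 0 := by
  intro hcon
  have : (1:ℂ) = w := by linear_combination hcon
  rw [← this] at hw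
  simp at hw

lemma oneVar (a : ℂ) {z : ℂ} (hz : ‖z‖ < 1) : fb a z = (1 - z) ^ (-a) := by
  set g : ℂ → ℂ := fun w => (1 - w) ^ a * fb a w with hg
  have hgd : ∀ w ∈ Metric.ball (0:ℂ) 1, HasDerivAt g 0 w := by
    intro w hw
    rw [mem_ball_zero_iff] at hw
    have h1 : HasDerivAt (fun w : ℂ => 1 - w) (-1) w := (hasDerivAt_id w).const_sub 1
    have h2 : HasDerivAt (fun w : ℂ => (1 - w) ^ a) (a * (1 - w) ^ (a - 1) * (-1)) w :=
      h1.cpow_const (one_sub_mem_slitPlane hw)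
    have h3 := fb_hasDerivAt a hw
    have h4 := h2.mul h3
    have hne := one_sub_ne_zero hw
    have hsplit : (1 - w) ^ a = (1 - w) ^ (a - 1) * (1 - w) := by
      conv_lhs => rw [show a = (a - 1) + 1 by ring]
      rw [cpow_add _ _ hne, cpow_one]
    refine h4.congr_deriv (Eq.symm ?_)
    rw [hsplit]
    linear_combination (-((1:ℂ) - w) ^ (a - 1)) * (ode a hw)
  have hconst : g z = g 0 := by
    refine (convex_ball (0:ℂ) 1).is_const_of_fderivWithin_eq_zero
      (𝕜 := ℂ) (f := g) (s := Metric.ball (0:ℂ) 1) ?_ ?_ ?_ ?_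
    · exact fun w hw => ((hgd w hw).differentiableAt).differentiableWithinAt
    · intro w hw
      rw [fderivWithin_of_isOpen isOpen_ball hw]
      have := (hgd w hw).hasFDerivAt.fderiv
      rw [this]
      ext t
      simp
    · exact mem_ball_zero_iff.mpr hz
    · exact mem_ball_zero_iff.mpr (by simp)
  have f0 : fb a 0 = 1 := by
    rw [fb, tsum_eq_single 0 (fun n hn => by rw [zero_pow hn, mul_zero])]
    simp [poch_zero]
  have g0 : g 0 = 1 := by
    rw [hg]
    simp only [sub_zero, one_cpow, one_mul, f0]
  have hkey : (1 - z) ^ a * fb a z = 1 := hconst.trans g0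
  have hpne : (1 - z) ^ a ≠ 0 := by
    rw [Ne, cpow_eq_zero_iff]
    rintro ⟨h1, -⟩
    exact one_sub_ne_zero hz h1
  rw [cpow_neg]
  exact eq_inv_of_mul_eq_one_left (by rw [mul_comm]; exact hkey)

lemma antidiag_sum {K : Type*} [Field K] [CharZero K] (q u v : K) (n : ℕ) :
    ∑ p ∈ Finset.HasAntidiagonal.antidiagonal n, q / ((p.1.factorial : K) * (p.2.factorial : K)) * u ^ p.1 * v ^ p.2
      = q / n.factorial * (u + v) ^ n := by
  rw [Commute.add_pow' (Commute.all u v) n, Finset.mul_sum]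
  apply Finset.sum_congr rfl
  intro p hp
  rw [Finset.HasAntidiagonal.mem_antidiagonal] at hp
  have hnat := Nat.add_choose_mul_factorial_mul_factorial p.2 p.1
  rw [Nat.add_comm p.2 p.1] at hnat
  have hfacts : ((n.factorial : K)) = (n.choose p.1 : K) * p.1.factorial * p.2.factorial := by
    rw [← hp, ← hnat]
    push_cast
    ring
  have h1 : ((p.1.factorial : K)) ≠ 0 := by exact_mod_cast p.1.factorial_ne_zero
  have h2 : ((p.2.factorial : K)) ≠ 0 := by exact_mod_cast p.2.factorial_ne_zero
  have h3 : ((n.factorial : K)) ≠ 0 := by exact_mod_cast n.factorial_ne_zero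
  have h4 : ((n.choose p.1 : K)) ≠ 0 := by
    have : 0 < n.choose p.1 := Nat.choose_pos (by omega)
    exact_mod_cast this.ne'
  rw [nsmul_eq_mul, hfacts]
  field_simp

set_option maxHeartbeats 1000000 in
theorem stmt4 (a x y : ℂ) (h : ‖x‖ + ‖y‖ < 1) :
    ∑' p : ℕ × ℕ,
        poch a (p.1 + p.2) / ((p.1.factorial : ℂ) * (p.2.factorial : ℂ)) * x ^ p.1 * y ^ p.2
      = (1 - x - y) ^ (-a) := by
  have hs0 : (0:ℝ) ≤ ‖x‖ + ‖y‖ := by positivity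
  set F : ℕ × ℕ → ℂ := fun p =>
    poch a (p.1 + p.2) / ((p.1.factorial : ℂ) * (p.2.factorial : ℂ)) * x ^ p.1 * y ^ p.2 with hF
  set B : ℕ × ℕ → ℝ := fun p =>
    Q a (p.1 + p.2) / ((p.1.factorial : ℝ) * (p.2.factorial : ℝ)) * ‖x‖ ^ p.1 * ‖y‖ ^ p.2 with hB
  have hBnn : ∀ p, 0 ≤ B p := by
    intro p
    have := Q_nonneg a (p.1 + p.2)
    rw [hB]
    positivity
  have hFB : ∀ p, ‖F p‖ ≤ B p := by
    intro p
    rw [hF, hB]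
    simp only [norm_mul, norm_div, norm_pow, Complex.norm_natCast]
    have h1 : (0:ℝ) < p.1.factorial := by positivity
    have h2 : (0:ℝ) < p.2.factorial := by positivity
    gcongr
    exact norm_poch_le a _
  have hsumB : ∀ n : ℕ, ∑ p ∈ Finset.HasAntidiagonal.antidiagonal n, B p
      = Q a n / n.factorial * (‖x‖ + ‖y‖) ^ n := by
    intro n
    rw [← antidiag_sum (Q a n) ‖x‖ ‖y‖ n]
    apply Finset.sum_congr rfl
    intro p hp
    rw [Finset.HasAntidiagonal.mem_antidiagonal] at hp
    simp only [hB]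
    rw [hp]
  have hBsig : Summable (B ∘ Finset.HasAntidiagonal.sigmaAntidiagonalEquivProd) := by
    apply (summable_sigma_of_nonneg (fun σ => hBnn _)).mpr
    refine ⟨fun n => (hasSum_fintype _).summable, ?_⟩
    apply ((summable_Q a hs0 h).congr (fun n => ?_))
    rw [← hsumB n, tsum_fintype, ← Finset.sum_coe_sort (Finset.HasAntidiagonal.antidiagonal n) B]
    rfl
  have hBsum : Summable B := (Equiv.summable_iff _).1 hBsig
  have hFsum : Summable F := Summable.of_norm (hBsum.of_nonneg_of_le
    (fun p => norm_nonneg _) hFB)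
  have hxy : ‖x + y‖ < 1 := lt_of_le_of_lt (norm_add_le x y) h
  calc ∑' p : ℕ × ℕ, F p
      = ∑' σ : Σ n : ℕ, ↥(Finset.HasAntidiagonal.antidiagonal n), F (Finset.HasAntidiagonal.sigmaAntidiagonalEquivProd σ) :=
        (Finset.HasAntidiagonal.sigmaAntidiagonalEquivProd.tsum_eq F).symm
  _ = ∑' n : ℕ, ∑' p : ↥(Finset.HasAntidiagonal.antidiagonal n), F ↑p :=
        Summable.tsum_sigma' (fun n => (hasSum_fintype _).summable)
          ((Equiv.summable_iff _).2 hFsum)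
  _ = ∑' n : ℕ, poch a n / n.factorial * (x + y) ^ n := by
        apply tsum_congr
        intro n
        rw [tsum_fintype, ← antidiag_sum (poch a n) x y n,
          ← Finset.sum_coe_sort (Finset.HasAntidiagonal.antidiagonal n)]
        apply Finset.sum_congr rfl
        intro p hp
        have hp' := p.2
        rw [Finset.HasAntidiagonal.mem_antidiagonal] at hp'
        rw [hF]
        simp only
        rw [hp']
  _ = fb a (x + y) := rfl
  _ = (1 - (x + y)) ^ (-a) := oneVar a hxy
  _ = (1 - x - y) ^ (-a) := by rw [sub_sub]
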